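/- arXiv:2204.13185 — 2 statements merged into one kernel-verified Lean document; each statement's English description precedes it below -/
import Mathlib

section
/- For the closed unit interval $I = [0,1] \subseteq \mathbb{R}$ and any sheaf of abelian groups $\mathcal{F}$ on $I$, the sheaf cohomology group $H^p(I, \mathcal{F})$ vanishes for all $p > 1$. -/
noncomputable section
open CategoryTheory CategoryTheory.Limits TopologicalSpace Opposite

/-- The category of sheaves of abelian groups on a topological space. -/
abbrev AbSheaf (X : TopCat.{0}) := Sheaf (Opens.grothendieckTopology X) AddCommGrpCat.{0}

/-- The global sections functor `F ↦ F(X)`. -/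
def globalSections (X : TopCat.{0}) : AbSheaf X ⥤ AddCommGrpCat.{0} :=
  sheafToPresheaf (Opens.grothendieckTopology X) AddCommGrpCat ⋙
    (CategoryTheory.evaluation (Opens X)ᵒᵖ AddCommGrpCat).obj (op ⊤)

instance (X : TopCat.{0}) :
    (sheafToPresheaf (Opens.grothendieckTopology X) AddCommGrpCat.{0}).Additive :=
  have : PreservesBinaryBiproducts
      (sheafToPresheaf (Opens.grothendieckTopology X) AddCommGrpCat.{0}) :=
    preservesBinaryBiproducts_of_preservesBinaryProducts _
  Functor.additive_of_preservesBinaryBiproducts _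

instance (X : TopCat.{0}) : (globalSections X).Additive := by
  unfold globalSections; infer_instance

/-- Sheaf cohomology `H^p(X, -)` as the `p`-th right derived functor of global sections. -/
def sheafCohomology (X : TopCat.{0}) [EnoughInjectives (AbSheaf X)] (p : ℕ) :
    AbSheaf X ⥤ AddCommGrpCat.{0} :=
  (globalSections X).rightDerived p

/-- The closed unit interval `[0,1] ⊆ ℝ` as a topological space. -/
def unitInterval' : TopCat.{0} := TopCat.of (Set.Icc (0:ℝ) 1)

namespace SV
variable {X : TopCat.{0}}

abbrev res (F : AbSheaf X) {U V : Opens X} (h : V ≤ U) :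
    F.val.obj (op U) ⟶ F.val.obj (op V) :=
  F.val.map (homOfLE h).op

def toTop (F : AbSheaf X) : TopCat.Sheaf AddCommGrpCat.{0} X := F

lemma res_res (F : AbSheaf X) {U V W : Opens X} (h1 : V ≤ U) (h2 : W ≤ V)
    (h3 : W ≤ U) (s : F.val.obj (op U)) : res F h2 (res F h1 s) = res F h3 s := by
  rw [← comp_apply, ← F.val.map_comp]
  congr 1

lemma map_eq_res (F : AbSheaf X) {U V : Opens X} (f : V ⟶ U) :
    F.val.map f.op = res F f.le := by congr 1

lemma res_self (F : AbSheaf X) {U : Opens X} (h : U ≤ U) (s : F.val.obj (op U)) :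
    res F h s = s := by
  show F.val.map (homOfLE h).op s = s
  have : (homOfLE h).op = 𝟙 (op U) := by
    rw [Subsingleton.elim (homOfLE h) (𝟙 U)]; rfl
  rw [this, F.val.map_id]; rfl

lemma app_res {F G : AbSheaf X} (φ : F ⟶ G) {U V : Opens X} (h : V ≤ U)
    (s : F.val.obj (op U)) :
    φ.hom.app (op V) (res F h s) = res G h (φ.hom.app (op U) s) := by
  rw [← comp_apply, φ.hom.naturality, comp_apply]

lemma bot_eq (F : AbSheaf X) (s t : F.val.obj (op (⊥ : Opens X))) : s = t := by
  apply TopCat.Sheaf.eq_of_locally_eq' (toTop F) (fun i : PEmpty.{1} => ⊥) ⊥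
    (fun i => i.elim)
  · intro x hx
    simp at hx
  · intro i; exact i.elim

section Glue
variable (F : AbSheaf X)

lemma glue2 (U1 U2 : Opens X)
    (s1 : F.val.obj (op U1)) (s2 : F.val.obj (op U2))
    (hag : ∀ (Z : Opens X) (h1 : Z ≤ U1) (h2 : Z ≤ U2), res F h1 s1 = res F h2 s2) :
    ∃ σ : F.val.obj (op (U1 ⊔ U2)),
      res F le_sup_left σ = s1 ∧ res F le_sup_right σ = s2 := by
  let Ufam : Bool → Opens X := fun b => match b with | true => U1 | false => U2
  let sfam : ∀ b, F.val.obj (op (Ufam b)) := fun b => match b with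
    | true => s1 | false => s2
  have hle : ∀ b, Ufam b ≤ U1 ⊔ U2 := by
    intro b; cases b
    · exact le_sup_right
    · exact le_sup_left
  have h := TopCat.Sheaf.existsUnique_gluing' (toTop F) Ufam (U1 ⊔ U2)
    (fun b => homOfLE (hle b)) (by
      intro x hx
      rcases hx with h1 | h2
      · exact Opens.mem_iSup.mpr ⟨true, h1⟩
      · exact Opens.mem_iSup.mpr ⟨false, h2⟩)
    sfam (by
      intro i j
      cases i <;> cases j
      · rfl
      · exact hag (U2 ⊓ U1) inf_le_right inf_le_left |>.symm
      · exact hag (U1 ⊓ U2) inf_le_left inf_le_right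
      · rfl)
  obtain ⟨σ, hσ, -⟩ := h
  exact ⟨σ, hσ true, hσ false⟩

lemma glue3 (U1 U2 U3 : Opens X)
    (s1 : F.val.obj (op U1)) (s2 : F.val.obj (op U2)) (s3 : F.val.obj (op U3))
    (h12 : ∀ (Z : Opens X) (h1 : Z ≤ U1) (h2 : Z ≤ U2), res F h1 s1 = res F h2 s2)
    (h13 : ∀ (Z : Opens X) (h1 : Z ≤ U1) (h3 : Z ≤ U3), res F h1 s1 = res F h3 s3)
    (h23 : ∀ (Z : Opens X) (h2 : Z ≤ U2) (h3 : Z ≤ U3), res F h2 s2 = res F h3 s3) :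
    ∃ σ : F.val.obj (op (U1 ⊔ U2 ⊔ U3)),
      res F (le_sup_left.trans le_sup_left) σ = s1 ∧
      res F (le_sup_right.trans le_sup_left) σ = s2 ∧
      res F le_sup_right σ = s3 := by
  obtain ⟨σ12, hσ1, hσ2⟩ := glue2 F U1 U2 s1 s2 h12
  have hag : ∀ (Z : Opens X) (h1 : Z ≤ U1 ⊔ U2) (h2 : Z ≤ U3),
      res F h1 σ12 = res F h2 s3 := by
    intro Z h1 h2
    apply TopCat.Sheaf.eq_of_locally_eq' (toTop F)
      (fun b : Bool => match b with | true => Z ⊓ U1 | false => Z ⊓ U2) Z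
      (fun b => match b with | true => homOfLE inf_le_left | false => homOfLE inf_le_left)
      (by
        intro x hx
        rcases h1 hx with hx1 | hx2
        · exact Opens.mem_iSup.mpr ⟨true, ⟨hx, hx1⟩⟩
        · exact Opens.mem_iSup.mpr ⟨false, ⟨hx, hx2⟩⟩)
    intro b
    cases b
    · show res F (inf_le_left : Z ⊓ U2 ≤ Z) (res F h1 σ12) =
        res F inf_le_left (res F h2 s3)
      calc res F (inf_le_left : Z ⊓ U2 ≤ Z) (res F h1 σ12)
          = res F inf_le_right (res F (le_sup_right : U2 ≤ U1 ⊔ U2) σ12) := by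
            rw [res_res F h1 inf_le_left (inf_le_left.trans h1),
              res_res F le_sup_right inf_le_right (inf_le_left.trans h1)]
        _ = res F inf_le_right s2 := by rw [hσ2]
        _ = res F inf_le_left (res F h2 s3) := by
            rw [res_res F h2 (inf_le_left : Z ⊓ U2 ≤ Z) ((inf_le_left : Z ⊓ U2 ≤ Z).trans h2)]
            exact h23 (Z ⊓ U2) inf_le_right ((inf_le_left : Z ⊓ U2 ≤ Z).trans h2)
    · show res F (inf_le_left : Z ⊓ U1 ≤ Z) (res F h1 σ12) =
        res F inf_le_left (res F h2 s3)
      calc res F (inf_le_left : Z ⊓ U1 ≤ Z) (res F h1 σ12)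
          = res F inf_le_right (res F (le_sup_left : U1 ≤ U1 ⊔ U2) σ12) := by
            rw [res_res F h1 inf_le_left (inf_le_left.trans h1),
              res_res F le_sup_left inf_le_right (inf_le_left.trans h1)]
        _ = res F inf_le_right s1 := by rw [hσ1]
        _ = res F inf_le_left (res F h2 s3) := by
            rw [res_res F h2 (inf_le_left : Z ⊓ U1 ≤ Z) ((inf_le_left : Z ⊓ U1 ≤ Z).trans h2)]
            exact h13 (Z ⊓ U1) inf_le_right ((inf_le_left : Z ⊓ U1 ≤ Z).trans h2)
  obtain ⟨σ, hσ12, hσ3⟩ := glue2 F (U1 ⊔ U2) U3 σ12 s3 hag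
  refine ⟨σ, ?_, ?_, hσ3⟩
  · rw [← hσ1, ← hσ12,
      res_res F le_sup_left le_sup_left (le_sup_left.trans le_sup_left) σ]
  · rw [← hσ2, ← hσ12,
      res_res F le_sup_left le_sup_right (le_sup_right.trans le_sup_left) σ]

/-- equality of two sections checked on a 3-piece cover -/
lemma eq3 (U1 U2 U3 V : Opens X) (hc : V ≤ U1 ⊔ U2 ⊔ U3)
    (s t : F.val.obj (op V))
    (h1 : res F (inf_le_right : U1 ⊓ V ≤ V) s = res F inf_le_right t)
    (h2 : res F (inf_le_right : U2 ⊓ V ≤ V) s = res F inf_le_right t)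
    (h3 : res F (inf_le_right : U3 ⊓ V ≤ V) s = res F inf_le_right t) : s = t := by
  apply TopCat.Sheaf.eq_of_locally_eq' (toTop F)
    (fun i : Fin 3 => match i with
      | 0 => U1 ⊓ V | 1 => U2 ⊓ V | 2 => U3 ⊓ V) V
    (fun i => match i with
      | 0 => homOfLE inf_le_right | 1 => homOfLE inf_le_right | 2 => homOfLE inf_le_right)
    (by
      intro x hx
      rcases hc hx with (hx1 | hx2) | hx3
      · exact Opens.mem_iSup.mpr ⟨0, ⟨hx1, hx⟩⟩
      · exact Opens.mem_iSup.mpr ⟨1, ⟨hx2, hx⟩⟩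
      · exact Opens.mem_iSup.mpr ⟨2, ⟨hx3, hx⟩⟩)
  intro i
  match i with
  | 0 => exact h1
  | 1 => exact h2
  | 2 => exact h3

lemma eq2 (U1 U2 V : Opens X) (hc : V ≤ U1 ⊔ U2)
    (s t : F.val.obj (op V))
    (h1 : res F (inf_le_right : U1 ⊓ V ≤ V) s = res F inf_le_right t)
    (h2 : res F (inf_le_right : U2 ⊓ V ≤ V) s = res F inf_le_right t) : s = t :=
  eq3 F U1 U2 U2 V (le_trans hc (by
    exact sup_le (le_sup_left.trans le_sup_left) le_sup_right)) s t h1 h2 h2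

end Glue

/-! interval topology -/

abbrev XI : TopCat.{0} := unitInterval'

def oIio (a : ℝ) : Opens XI :=
  ⟨Subtype.val ⁻¹' Set.Iio a, isOpen_Iio.preimage continuous_subtype_val⟩

def oIoi (a : ℝ) : Opens XI :=
  ⟨Subtype.val ⁻¹' Set.Ioi a, isOpen_Ioi.preimage continuous_subtype_val⟩

def oIoo (a b : ℝ) : Opens XI :=
  ⟨Subtype.val ⁻¹' Set.Ioo a b, isOpen_Ioo.preimage continuous_subtype_val⟩

lemma mem_oIio {a : ℝ} {x : ↑XI} : x ∈ oIio a ↔ x.1 < a := Iff.rfl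
lemma mem_oIoi {a : ℝ} {x : ↑XI} : x ∈ oIoi a ↔ a < x.1 := Iff.rfl
lemma mem_oIoo {a b : ℝ} {x : ↑XI} : x ∈ oIoo a b ↔ a < x.1 ∧ x.1 < b := Iff.rfl

def cIcc (a b : ℝ) : Set ↑XI := {x | a ≤ x.1 ∧ x.1 ≤ b}

lemma xi_mem_icc (x : ↑XI) : 0 ≤ x.1 ∧ x.1 ≤ 1 := x.2

lemma open_ball {U : Opens XI} {x : ↑XI} (hx : x ∈ U) :
    ∃ δ > 0, ∀ y : ↑XI, |y.1 - x.1| < δ → y ∈ U := by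
  obtain ⟨V, hV, hpre⟩ := isOpen_induced_iff.mp U.isOpen
  have hxV : x.1 ∈ V := by
    have : x ∈ Subtype.val ⁻¹' V := hpre ▸ hx
    exact this
  obtain ⟨δ, hδ, hball⟩ := Metric.isOpen_iff.mp hV x.1 hxV
  refine ⟨δ, hδ, fun y hy => ?_⟩
  have h2 : y ∈ Subtype.val ⁻¹' V := hball (by rwa [Metric.mem_ball, Real.dist_eq])
  show y ∈ (U : Set ↑XI)
  rw [← hpre]; exact h2

def secF (U : Opens X) : AbSheaf X ⥤ AddCommGrpCat.{0} :=
  sheafToPresheaf (Opens.grothendieckTopology X) AddCommGrpCat ⋙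
    (CategoryTheory.evaluation (Opens X)ᵒᵖ AddCommGrpCat).obj (op U)

instance (U : Opens X) : PreservesLimits (secF (X := X) U) := by
  unfold secF; infer_instance

lemma secF_map (U : Opens X) {F G : AbSheaf X} (φ : F ⟶ G) :
    (secF U).map φ = φ.hom.app (op U) := rfl

lemma loc_surj {F G : AbSheaf X} (φ : F ⟶ G) [Epi φ] (U : Opens X)
    (s : G.val.obj (op U)) {x : X} (hx : x ∈ U) :
    ∃ (V : Opens X) (hVU : V ≤ U), x ∈ V ∧
      ∃ t : F.val.obj (op V), φ.hom.app (op V) t = res G hVU s := by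
  have hls : Sheaf.IsLocallySurjective φ := by
    rw [Sheaf.isLocallySurjective_iff_epi']; infer_instance
  have := hls.imageSieve_mem (U := U) s
  obtain ⟨V, f, hf, hxV⟩ := this x hx
  obtain ⟨t, ht⟩ := hf
  exact ⟨V, f.le, hxV, t, by rw [ht, map_eq_res]⟩

lemma cycles_section (S : ShortComplex (AbSheaf X)) (U : Opens X)
    (b : S.X₂.val.obj (op U)) (hb : S.g.hom.app (op U) b = 0) :
    ∃ c : S.cycles.val.obj (op U), S.iCycles.hom.app (op U) c = b := by
  have hK := S.cyclesIsKernel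
  have hL : IsLimit ((KernelFork.ofι S.iCycles S.iCycles_g).map (secF U)) :=
    KernelFork.mapIsLimit _ hK (secF U)
  let β : AddCommGrpCat.of ℤ ⟶ (secF U).obj S.X₂ := AddCommGrpCat.ofHom (zmultiplesHom _ b)
  have hβ : β (1 : ℤ) = b := one_zsmul b
  have w : β ≫ (secF U).map S.g = 0 := by
    ext
    show (secF U).map S.g (β (1 : ℤ)) = 0
    rw [hβ, secF_map]
    exact hb
  obtain ⟨l, hl⟩ := KernelFork.IsLimit.lift' hL β w
  refine ⟨l (1 : ℤ), ?_⟩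
  have h2 : S.iCycles.hom.app (op U) (l (1 : ℤ)) = β (1 : ℤ) :=
    ConcreteCategory.congr_hom hl (1 : ℤ)
  rw [h2, hβ]

lemma sc_zero_app (S : ShortComplex (AbSheaf X)) (U : Opens X)
    (t : S.X₁.val.obj (op U)) :
    S.g.hom.app (op U) (S.f.hom.app (op U) t) = 0 := by
  have h : (secF U).map S.f ≫ (secF U).map S.g = 0 := by
    rw [← Functor.map_comp, S.zero, Functor.map_zero]
  have := congrArg (fun (ψ : (secF U).obj S.X₁ ⟶ (secF U).obj S.X₃) => ψ t) h
  exact this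

lemma exact_local_lift (S : ShortComplex (AbSheaf X)) (hS : S.Exact) (U : Opens X)
    (b : S.X₂.val.obj (op U)) (hb : S.g.hom.app (op U) b = 0) {x : X} (hx : x ∈ U) :
    ∃ (V : Opens X) (hVU : V ≤ U), x ∈ V ∧
      ∃ t : S.X₁.val.obj (op V), S.f.hom.app (op V) t = res S.X₂ hVU b := by
  obtain ⟨c, hc⟩ := cycles_section S U b hb
  have : Epi S.toCycles := S.exact_iff_epi_toCycles.mp hS
  obtain ⟨V, hVU, hxV, t, ht⟩ := loc_surj S.toCycles U c hx
  refine ⟨V, hVU, hxV, t, ?_⟩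
  have h1 : (secF V).map S.toCycles ≫ (secF V).map S.iCycles = (secF V).map S.f := by
    rw [← Functor.map_comp, S.toCycles_i]
  have h2 : S.iCycles.hom.app (op V) (S.toCycles.hom.app (op V) t) =
      S.f.hom.app (op V) t := ConcreteCategory.congr_hom h1 t
  rw [← h2, ht, app_res, hc]


def Flabby (F : AbSheaf X) : Prop :=
  ∀ U : Opens X, Function.Surjective (res F (le_top : U ≤ ⊤))

def gdObj (G : AbSheaf X) (U : Opens X) : Type :=
  ∀ x : U, (TopCat.Presheaf.stalk (C := AddCommGrpCat.{0}) G.val x.1 : Type)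

instance (G : AbSheaf X) (U : Opens X) : AddCommGroup (gdObj G U) :=
  Pi.addCommGroup

def gdMap (G : AbSheaf X) {U V : Opens X} (h : V ≤ U) : gdObj G U →+ gdObj G V where
  toFun s x := s ⟨x.1, h x.2⟩
  map_zero' := rfl
  map_add' _ _ := rfl

def gdPre (G : AbSheaf X) : TopCat.Presheaf AddCommGrpCat.{0} X where
  obj P := AddCommGrpCat.of (gdObj G P.unop)
  map {P Q} i := AddCommGrpCat.ofHom (gdMap G i.unop.le)
  map_id P := by ext s; rfl
  map_comp f g := by ext s; rfl

lemma gdPre_isSheaf (G : AbSheaf X) : (gdPre G).IsSheaf := by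
  rw [TopCat.Presheaf.isSheaf_iff_isSheafUniqueGluing]
  intro ι U sf hcomp
  have key : ∀ (i j : ι) (x : X) (hi : x ∈ U i) (hj : x ∈ U j),
      sf i ⟨x, hi⟩ = sf j ⟨x, hj⟩ := by
    intro i j x hi hj
    have := congrFun (congrArg (fun (f : gdObj G (U i ⊓ U j)) => (f : gdObj G (U i ⊓ U j)))
      (hcomp i j)) ⟨x, ⟨hi, hj⟩⟩
    exact this
  choose idx hidx using fun x : (iSup U : Opens X) => Opens.mem_iSup.mp x.2
  refine ⟨(fun x => sf (idx x) ⟨x.1, hidx x⟩ : gdObj G (iSup U)), fun i => ?_, ?_⟩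
  · funext (x : (U i : Opens X))
    have hxs : x.1 ∈ iSup U := (Opens.leSupr U i).le x.2
    exact key (idx ⟨x.1, hxs⟩) i x.1 (hidx ⟨x.1, hxs⟩) x.2
  · intro t ht
    funext x
    have := congrFun (congrArg (fun (f : gdObj G (U (idx x))) => f) (ht (idx x))) ⟨x.1, hidx x⟩
    exact this

def godement (G : AbSheaf X) : AbSheaf X := ⟨gdPre G, gdPre_isSheaf G⟩

lemma godement_flabby (G : AbSheaf X) : Flabby (godement G) := by
  intro U s
  classical
  refine ⟨(fun x => if h : x.1 ∈ U then s ⟨x.1, h⟩ else 0 : gdObj G ⊤), ?_⟩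
  funext x
  exact dif_pos x.2

def toGodement (G : AbSheaf X) : G ⟶ godement G where
  hom :=
    { app := fun P => AddCommGrpCat.ofHom
        { toFun := fun s => (fun x => TopCat.Presheaf.germ G.val P.unop x.1 x.2 s : gdObj G P.unop)
          map_zero' := by funext x; exact map_zero _
          map_add' := fun a b => by funext x; exact map_add _ a b }
      naturality := fun P Q i => by
        ext s
        show (fun x => TopCat.Presheaf.germ G.val Q.unop x.1 x.2 (G.val.map i s) : gdObj G Q.unop) = _
        funext x
        exact TopCat.Presheaf.germ_res_apply' G.val i x.1 x.2 s }

instance toGodement_mono (G : AbSheaf X) : Mono (toGodement G) := by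
  haveI : ∀ P, Mono (((sheafToPresheaf _ _).map (toGodement G)).app P) := by
    intro P
    rw [AddCommGrpCat.mono_iff_injective]
    intro a b hab
    apply TopCat.Presheaf.section_ext (toTop G) P.unop
    intro x hx
    exact congrFun (congrArg (fun (f : gdObj G P.unop) => f) hab) ⟨x, hx⟩
  have : Mono ((sheafToPresheaf _ _).map (toGodement G)) := NatTrans.mono_of_mono_app _
  exact (sheafToPresheaf _ _).mono_of_mono_map this

lemma flabby_of_retract {G H : AbSheaf X} (i : G ⟶ H) (r : H ⟶ G)
    (hir : i ≫ r = 𝟙 G) (hH : Flabby H) : Flabby G := by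
  intro U s
  obtain ⟨t, ht⟩ := hH U (i.hom.app (op U) s)
  refine ⟨r.hom.app (op ⊤) t, ?_⟩
  have h1 : r.hom.app (op U) (res H (le_top : U ≤ ⊤) t) = res G le_top (r.hom.app (op ⊤) t) := by
    rw [← comp_apply, r.hom.naturality, comp_apply]
  rw [← h1, ht]
  have := congrArg (fun (φ : G ⟶ G) => φ.hom.app (op U) s) hir
  simpa using this

lemma flabby_of_injective (G : AbSheaf X) [Injective G] : Flabby G :=
  flabby_of_retract (toGodement G) (Injective.factorThru (𝟙 G) (toGodement G))
    (Injective.comp_factorThru _ _) (godement_flabby G)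

end SV

namespace SV2
open SV

/-- Extension property for sections of `J` killed by `f` : any such section defined near a
closed subinterval of `[0,1]` extends to a global section killed by `f`. -/
def KerExt {J K : AbSheaf XI} (f : J ⟶ K) : Prop :=
  ∀ (u v : ℝ) (W : Opens XI), cIcc u v ⊆ (W : Set ↑XI) →
  ∀ a : J.val.obj (op W), f.hom.app (op W) a = 0 →
  ∃ (aext : J.val.obj (op ⊤)) (W' : Opens XI) (hW'W : W' ≤ W),
    f.hom.app (op ⊤) aext = 0 ∧ cIcc u v ⊆ (W' : Set ↑XI) ∧
    res J (le_top : W' ≤ ⊤) aext = res J hW'W a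

lemma kerExt_of_flabby (S : ShortComplex (AbSheaf XI)) (hS : S.Exact)
    (hfl : Flabby S.X₁) : KerExt S.g := by
  intro u v W hW a ha
  by_cases hne : ∃ x : ↑XI, u ≤ x.1 ∧ x.1 ≤ v
  case neg =>
    push_neg at hne
    refine ⟨0, ⊥, bot_le, map_zero _, ?_, bot_eq S.X₂ _ _⟩
    intro x hx
    exact absurd hx.2 (not_le.mpr (hne x hx.1))
  case pos =>
  obtain ⟨p0, hp0u, hp0v⟩ := hne
  set u' := max u 0 with hu'def
  set v' := min v 1 with hv'def
  have h0u' : 0 ≤ u' := le_max_right _ _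
  have hv'1 : v' ≤ 1 := min_le_right _ _
  have hu'p0 : u' ≤ p0.1 := max_le hp0u p0.2.1
  have hp0v' : p0.1 ≤ v' := le_min hp0v p0.2.2
  have huv' : u' ≤ v' := le_trans hu'p0 hp0v'
  have hmemIcc : ∀ x : ↑XI, (x ∈ cIcc u v) ↔ (u' ≤ x.1 ∧ x.1 ≤ v') := by
    intro x
    constructor
    · rintro ⟨h1, h2⟩; exact ⟨max_le h1 x.2.1, le_min h2 x.2.2⟩
    · rintro ⟨h1, h2⟩
      exact ⟨(le_max_left u 0).trans h1, h2.trans (min_le_left v 1)⟩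
  -- the two endpoints
  set pu : ↑XI := ⟨u', ⟨h0u', huv'.trans hv'1⟩⟩ with hpudef
  set pv : ↑XI := ⟨v', ⟨h0u'.trans huv', hv'1⟩⟩ with hpvdef
  have hpuW : pu ∈ W := hW ((hmemIcc pu).mpr ⟨le_refl _, huv'⟩)
  have hpvW : pv ∈ W := hW ((hmemIcc pv).mpr ⟨huv', le_refl _⟩)
  -- local lifts at the endpoints
  obtain ⟨Vu, hVuW, hpuVu, tu, htu⟩ := exact_local_lift S hS W a ha hpuW
  obtain ⟨Vv, hVvW, hpvVv, tv, htv⟩ := exact_local_lift S hS W a ha hpvW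
  obtain ⟨δu, hδu, hballu⟩ := open_ball hpuVu
  obtain ⟨δv, hδv, hballv⟩ := open_ball hpvVv
  obtain ⟨teu, hteu⟩ := hfl Vu tu
  obtain ⟨tev, htev⟩ := hfl Vv tv
  set du := S.f.hom.app (op ⊤) teu with hdudef
  set dv := S.f.hom.app (op ⊤) tev with hdvdef
  have hgdu : S.g.hom.app (op ⊤) du = 0 := sc_zero_app S ⊤ teu
  have hgdv : S.g.hom.app (op ⊤) dv = 0 := sc_zero_app S ⊤ tev
  have hduVu : res S.X₂ (le_top : Vu ≤ ⊤) du = res S.X₂ hVuW a := by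
    rw [hdudef, ← app_res, hteu, htu]
  have hdvVv : res S.X₂ (le_top : Vv ≤ ⊤) dv = res S.X₂ hVvW a := by
    rw [hdvdef, ← app_res, htev, htv]
  by_cases hcase : u' < v'
  case neg =>
    -- point case
    have huv'' : u' = v' := le_antisymm huv' (not_lt.mp hcase)
    refine ⟨du, Vu, hVuW, hgdu, fun x hx => ?_, hduVu⟩
    have hx' := (hmemIcc x).mp hx
    have hxle : x.1 ≤ u' := by rw [huv'']; exact hx'.2
    have : x = pu := Subtype.ext (le_antisymm hxle hx'.1)
    rw [this]; exact hpuVu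
  case pos =>
  set ε := min (min δu δv) ((v' - u') / 2) with hεdef
  have hε : 0 < ε := lt_min (lt_min hδu hδv) (by linarith)
  have hεu : ε ≤ δu := (min_le_left _ _).trans (min_le_left _ _)
  have hεv : ε ≤ δv := (min_le_left _ _).trans (min_le_right _ _)
  have hεm : 2 * ε ≤ v' - u' := by
    have := min_le_right (min δu δv) ((v' - u') / 2)
    linarith
  set P1 := oIio (u' + ε) with hP1def
  set P2 := W ⊓ oIoo u' v' with hP2def
  set P3 := oIoi (v' - ε) with hP3def
  have htop : (⊤ : Opens XI) ≤ P1 ⊔ P2 ⊔ P3 := by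
    intro x _
    rcases lt_or_ge x.1 (u' + ε) with h1 | h1
    · exact Or.inl (Or.inl h1)
    rcases lt_or_ge (v' - ε) x.1 with h2 | h2
    · exact Or.inr h2
    refine Or.inl (Or.inr ⟨hW ((hmemIcc x).mpr ⟨by linarith, by linarith⟩), ?_, ?_⟩)
    · show u' < x.1; linarith
    · show x.1 < v'; linarith
  have h12 : ∀ (Z : Opens XI) (h1 : Z ≤ P1) (h2 : Z ≤ P2),
      res S.X₂ h1 (res S.X₂ (le_top : P1 ≤ ⊤) du)
        = res S.X₂ h2 (res S.X₂ (inf_le_left : P2 ≤ W) a) := by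
    intro Z h1 h2
    have hZV : Z ≤ Vu := by
      intro z hz
      have hz1 : z.1 < u' + ε := h1 hz
      have hz2 : u' < z.1 := (h2 hz).2.1
      exact hballu z (abs_lt.mpr ⟨by linarith, by linarith⟩)
    calc res S.X₂ h1 (res S.X₂ (le_top : P1 ≤ ⊤) du)
        = res S.X₂ hZV (res S.X₂ (le_top : Vu ≤ ⊤) du) := by
          rw [res_res S.X₂ le_top h1 (le_top : Z ≤ ⊤),
            res_res S.X₂ le_top hZV (le_top : Z ≤ ⊤)]
      _ = res S.X₂ hZV (res S.X₂ hVuW a) := by rw [hduVu]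
      _ = res S.X₂ h2 (res S.X₂ (inf_le_left : P2 ≤ W) a) := by
          rw [res_res S.X₂ hVuW hZV (hZV.trans hVuW),
            res_res S.X₂ inf_le_left h2 (hZV.trans hVuW)]
  have h23 : ∀ (Z : Opens XI) (h2 : Z ≤ P2) (h3 : Z ≤ P3),
      res S.X₂ h2 (res S.X₂ (inf_le_left : P2 ≤ W) a)
        = res S.X₂ h3 (res S.X₂ (le_top : P3 ≤ ⊤) dv) := by
    intro Z h2 h3
    have hZV : Z ≤ Vv := by
      intro z hz
      have hz1 : v' - ε < z.1 := h3 hz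
      have hz2 : z.1 < v' := (h2 hz).2.2
      exact hballv z (abs_lt.mpr ⟨by linarith, by linarith⟩)
    calc res S.X₂ h2 (res S.X₂ (inf_le_left : P2 ≤ W) a)
        = res S.X₂ hZV (res S.X₂ hVvW a) := by
          rw [res_res S.X₂ inf_le_left h2 (hZV.trans hVvW),
            res_res S.X₂ hVvW hZV (hZV.trans hVvW)]
      _ = res S.X₂ hZV (res S.X₂ (le_top : Vv ≤ ⊤) dv) := by rw [hdvVv]
      _ = res S.X₂ h3 (res S.X₂ (le_top : P3 ≤ ⊤) dv) := by
          rw [res_res S.X₂ le_top hZV (le_top : Z ≤ ⊤),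
            res_res S.X₂ le_top h3 (le_top : Z ≤ ⊤)]
  have h13 : ∀ (Z : Opens XI) (h1 : Z ≤ P1) (h3 : Z ≤ P3),
      res S.X₂ h1 (res S.X₂ (le_top : P1 ≤ ⊤) du)
        = res S.X₂ h3 (res S.X₂ (le_top : P3 ≤ ⊤) dv) := by
    intro Z h1 h3
    have hZbot : Z = ⊥ := by
      apply le_antisymm _ bot_le
      intro z hz
      have hz1 : z.1 < u' + ε := h1 hz
      have hz3 : v' - ε < z.1 := h3 hz
      exfalso
      linarith
    subst hZbot
    exact bot_eq S.X₂ _ _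
  obtain ⟨σ, hσ1, hσ2, hσ3⟩ := glue3 S.X₂ P1 P2 P3
    (res S.X₂ (le_top : P1 ≤ ⊤) du) (res S.X₂ (inf_le_left : P2 ≤ W) a)
    (res S.X₂ (le_top : P3 ≤ ⊤) dv) h12 h13 h23
  -- the global section is the restriction of σ along ⊤ ≤ P1 ⊔ P2 ⊔ P3
  have hgaext : S.g.hom.app (op ⊤) (res S.X₂ htop σ) = 0 := by
    apply eq3 S.X₃ P1 P2 P3 ⊤ htop
    · rw [map_zero, ← app_res, res_res S.X₂ htop inf_le_right
        ((inf_le_left : P1 ⊓ ⊤ ≤ P1).trans (le_sup_left.trans le_sup_left)),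
        ← res_res S.X₂ (le_sup_left.trans le_sup_left) (inf_le_left : P1 ⊓ ⊤ ≤ P1)
        ((inf_le_left : P1 ⊓ ⊤ ≤ P1).trans (le_sup_left.trans le_sup_left)) σ, hσ1,
        res_res S.X₂ le_top inf_le_left (le_top : P1 ⊓ ⊤ ≤ ⊤),
        app_res, hgdu, map_zero]
    · rw [map_zero, ← app_res, res_res S.X₂ htop inf_le_right
        ((inf_le_left : P2 ⊓ ⊤ ≤ P2).trans (le_sup_right.trans le_sup_left)),
        ← res_res S.X₂ (le_sup_right.trans le_sup_left) (inf_le_left : P2 ⊓ ⊤ ≤ P2)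
        ((inf_le_left : P2 ⊓ ⊤ ≤ P2).trans (le_sup_right.trans le_sup_left)) σ, hσ2,
        res_res S.X₂ inf_le_left inf_le_left
          ((inf_le_left : P2 ⊓ ⊤ ≤ P2).trans inf_le_left),
        app_res, ha, map_zero]
    · rw [map_zero, ← app_res, res_res S.X₂ htop inf_le_right
        ((inf_le_left : P3 ⊓ ⊤ ≤ P3).trans le_sup_right),
        ← res_res S.X₂ le_sup_right (inf_le_left : P3 ⊓ ⊤ ≤ P3)
        ((inf_le_left : P3 ⊓ ⊤ ≤ P3).trans le_sup_right) σ, hσ3,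
        res_res S.X₂ le_top inf_le_left (le_top : P3 ⊓ ⊤ ≤ ⊤),
        app_res, hgdv, map_zero]
  set W' := Vu ⊓ P1 ⊔ P2 ⊔ Vv ⊓ P3 with hW'def
  have hW'W : W' ≤ W :=
    sup_le (sup_le (inf_le_left.trans hVuW) inf_le_left) (inf_le_left.trans hVvW)
  have hsub : cIcc u v ⊆ (W' : Set ↑XI) := by
    intro x hx
    obtain ⟨hx1, hx2⟩ := (hmemIcc x).mp hx
    rcases lt_or_ge x.1 (u' + ε) with h1 | h1
    · exact Or.inl (Or.inl ⟨hballu x (abs_lt.mpr ⟨by linarith, by linarith⟩), h1⟩)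
    rcases lt_or_ge (v' - ε) x.1 with h2 | h2
    · exact Or.inr ⟨hballv x (abs_lt.mpr ⟨by linarith, by linarith⟩), h2⟩
    refine Or.inl (Or.inr ⟨hW hx, ?_, ?_⟩)
    · show u' < x.1; linarith
    · show x.1 < v'; linarith
  refine ⟨res S.X₂ htop σ, W', hW'W, hgaext, hsub, ?_⟩
  apply eq3 S.X₂ (Vu ⊓ P1) P2 (Vv ⊓ P3) W' (le_refl _)
  · have hZ1 : Vu ⊓ P1 ⊓ W' ≤ P1 := inf_le_left.trans inf_le_right
    have hZu : Vu ⊓ P1 ⊓ W' ≤ Vu := inf_le_left.trans inf_le_left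
    rw [res_res S.X₂ le_top (inf_le_right : Vu ⊓ P1 ⊓ W' ≤ W') (le_top),
      res_res S.X₂ htop le_top (hZ1.trans (le_sup_left.trans le_sup_left)),
      ← res_res S.X₂ (le_sup_left.trans le_sup_left) hZ1
        (hZ1.trans (le_sup_left.trans le_sup_left)) σ, hσ1,
      res_res S.X₂ le_top hZ1 (le_top : Vu ⊓ P1 ⊓ W' ≤ ⊤),
      ← res_res S.X₂ (le_top : Vu ≤ ⊤) hZu (le_top : Vu ⊓ P1 ⊓ W' ≤ ⊤) du, hduVu,
      res_res S.X₂ hVuW hZu (hZu.trans hVuW),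
      res_res S.X₂ hW'W inf_le_right (hZu.trans hVuW)]
  · have hZ2 : P2 ⊓ W' ≤ P2 := inf_le_left
    rw [res_res S.X₂ le_top (inf_le_right : P2 ⊓ W' ≤ W') (le_top),
      res_res S.X₂ htop le_top (hZ2.trans (le_sup_right.trans le_sup_left)),
      ← res_res S.X₂ (le_sup_right.trans le_sup_left) hZ2
        (hZ2.trans (le_sup_right.trans le_sup_left)) σ, hσ2,
      res_res S.X₂ inf_le_left hZ2 (hZ2.trans inf_le_left),
      res_res S.X₂ hW'W inf_le_right (hZ2.trans inf_le_left)]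
  · have hZ3 : Vv ⊓ P3 ⊓ W' ≤ P3 := inf_le_left.trans inf_le_right
    have hZv : Vv ⊓ P3 ⊓ W' ≤ Vv := inf_le_left.trans inf_le_left
    rw [res_res S.X₂ le_top (inf_le_right : Vv ⊓ P3 ⊓ W' ≤ W') (le_top),
      res_res S.X₂ htop le_top (hZ3.trans le_sup_right),
      ← res_res S.X₂ le_sup_right hZ3 (hZ3.trans le_sup_right) σ, hσ3,
      res_res S.X₂ le_top hZ3 (le_top : Vv ⊓ P3 ⊓ W' ≤ ⊤),
      ← res_res S.X₂ (le_top : Vv ≤ ⊤) hZv (le_top : Vv ⊓ P3 ⊓ W' ≤ ⊤) dv, hdvVv,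
      res_res S.X₂ hVvW hZv (hZv.trans hVvW),
      res_res S.X₂ hW'W inf_le_right (hZv.trans hVvW)]


/-- Surjectivity on global sections onto cocycles, given the kernel-extension property. -/
lemma global_surj (S : ShortComplex (AbSheaf XI)) (hS : S.Exact) (hK : KerExt S.f)
    (s : S.X₂.val.obj (op ⊤)) (hs : S.g.hom.app (op ⊤) s = 0) :
    ∃ t : S.X₁.val.obj (op ⊤), S.f.hom.app (op ⊤) t = s := by
  classical
  -- P r : there is a lift of s on an open set containing [0, r]
  set P : ℝ → Prop := fun r => ∃ U : Opens XI, (∀ y : ↑XI, y.1 ≤ r → y ∈ U) ∧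
    ∃ t : S.X₁.val.obj (op U), S.f.hom.app (op U) t = res S.X₂ (le_top : U ≤ ⊤) s
    with hPdef
  have hP0 : P 0 := by
    have h0 : (⟨0, ⟨le_refl 0, zero_le_one⟩⟩ : ↑XI) ∈ (⊤ : Opens XI) := trivial
    obtain ⟨V, hV, hxV, t, ht⟩ := exact_local_lift S hS ⊤ s hs h0
    refine ⟨V, fun y hy => ?_, t, ht⟩
    have : y = (⟨0, ⟨le_refl 0, zero_le_one⟩⟩ : ↑XI) :=
      Subtype.ext (le_antisymm hy y.2.1)
    rw [this]; exact hxV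
  set Sset : Set ℝ := {r | (0 ≤ r ∧ r ≤ 1) ∧ P r} with hSsetdef
  have hS0 : (0 : ℝ) ∈ Sset := ⟨⟨le_refl 0, zero_le_one⟩, hP0⟩
  have hSne : Sset.Nonempty := ⟨0, hS0⟩
  have hSbdd : BddAbove Sset := ⟨1, fun r hr => hr.1.2⟩
  set c := sSup Sset with hcdef
  have hc0 : 0 ≤ c := le_csSup hSbdd hS0
  have hc1 : c ≤ 1 := csSup_le hSne (fun r hr => hr.1.2)
  -- a local lift near the point c
  set pc : ↑XI := ⟨c, ⟨hc0, hc1⟩⟩ with hpcdef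
  obtain ⟨V, hVtop, hpcV, h, hh⟩ := exact_local_lift S hS ⊤ s hs (trivial : pc ∈ ⊤)
  obtain ⟨δ, hδ, hball⟩ := open_ball hpcV
  -- pick x ∈ Sset with c - δ/2 < x
  obtain ⟨x, hxS, hxgt⟩ := exists_lt_of_lt_csSup hSne (by linarith : c - δ/2 < c)
  have hxc : x ≤ c := le_csSup hSbdd hxS
  obtain ⟨U, hU, t, ht⟩ := hxS.2
  -- the overlap region
  set m := (c - δ + x) / 2 with hmdef
  have hmx : m < x := by
    have : c - δ < x := by linarith
    simp only [hmdef]; linarith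
  have hlm : c - δ < m := by
    have : c - δ < x := by linarith
    simp only [hmdef]; linarith
  set O := U ⊓ oIoo (c - δ) (c + δ) with hOdef
  have hOV : O ≤ V := by
    intro z hz
    have h1 : c - δ < z.1 := hz.2.1
    have h2 : z.1 < c + δ := hz.2.2
    exact hball z (abs_lt.mpr ⟨by linarith, by linarith⟩)
  -- the difference of the two lifts on O, killed by f
  set aO := res S.X₁ (inf_le_left : O ≤ U) t - res S.X₁ hOV h with haOdef
  have hfaO : S.f.hom.app (op O) aO = 0 := by
    rw [haOdef, map_sub, app_res, app_res, ht, hh,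
      res_res S.X₂ le_top inf_le_left (le_top : O ≤ ⊤),
      res_res S.X₂ le_top hOV (le_top : O ≤ ⊤), sub_self]
  -- extend the difference to a global section killed by f
  have hCO : cIcc m x ⊆ (O : Set ↑XI) := by
    intro z hz
    refine ⟨hU z hz.2, ?_, ?_⟩
    · show c - δ < z.1; linarith [hz.1]
    · show z.1 < c + δ
      have := hz.2
      linarith
  obtain ⟨aext, W', hW'O, hfaext, hsub', hagree⟩ := hK m x O hCO aO hfaO
  -- glue the two lifts
  set Ul := U ⊓ oIio x with hUldef
  set Vr := oIoo m (c + δ) with hVrdef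
  have hVrV : Vr ≤ V := by
    intro z hz
    have h1 : m < z.1 := hz.1
    have h2 : z.1 < c + δ := hz.2
    exact hball z (abs_lt.mpr ⟨by linarith, by linarith⟩)
  have hagl : ∀ (Z : Opens XI) (h1 : Z ≤ Ul) (h2 : Z ≤ Vr),
      res S.X₁ h1 (res S.X₁ (inf_le_left : Ul ≤ U) t)
        = res S.X₁ h2 (res S.X₁ hVrV h + res S.X₁ (le_top : Vr ≤ ⊤) aext) := by
    intro Z h1 h2
    have hZO : Z ≤ O := by
      intro z hz
      refine ⟨(h1 hz).1, ?_, ?_⟩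
      · show c - δ < z.1; have := (h2 hz).1; linarith
      · show z.1 < c + δ; exact (h2 hz).2
    have hZW' : Z ≤ W' := by
      intro z hz
      apply hsub'
      constructor
      · exact le_of_lt (h2 hz).1
      · exact le_of_lt (h1 hz).2
    have key : res S.X₁ hZW' (res S.X₁ (le_top : W' ≤ ⊤) aext)
        = res S.X₁ hZO aO := by
      rw [hagree, res_res S.X₁ hW'O hZW' hZO]
    rw [map_add]
    have e1 : res S.X₁ h1 (res S.X₁ (inf_le_left : Ul ≤ U) t)
        = res S.X₁ hZO (res S.X₁ (inf_le_left : O ≤ U) t) := by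
      rw [res_res S.X₁ inf_le_left h1 (hZO.trans inf_le_left),
        res_res S.X₁ inf_le_left hZO (hZO.trans inf_le_left)]
    have e2 : res S.X₁ h2 (res S.X₁ hVrV h) = res S.X₁ hZO (res S.X₁ hOV h) := by
      rw [res_res S.X₁ hVrV h2 (hZO.trans hOV), res_res S.X₁ hOV hZO (hZO.trans hOV)]
    have e3 : res S.X₁ h2 (res S.X₁ (le_top : Vr ≤ ⊤) aext)
        = res S.X₁ hZO aO := by
      rw [res_res S.X₁ le_top h2 (le_top : Z ≤ ⊤),
        ← res_res S.X₁ (le_top : W' ≤ ⊤) hZW' (le_top : Z ≤ ⊤) aext, key]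
    rw [e1, e2, e3, haOdef, map_sub]
    abel
  obtain ⟨τ, hτ1, hτ2⟩ := glue2 S.X₁ Ul Vr
    (res S.X₁ (inf_le_left : Ul ≤ U) t)
    (res S.X₁ hVrV h + res S.X₁ (le_top : Vr ≤ ⊤) aext) hagl
  -- τ lifts s on Ul ⊔ Vr
  have hfτ : S.f.hom.app (op (Ul ⊔ Vr)) τ
      = res S.X₂ (le_top : Ul ⊔ Vr ≤ ⊤) s := by
    apply eq2 S.X₂ Ul Vr (Ul ⊔ Vr) (le_refl _)
    · have hZUl : Ul ⊓ (Ul ⊔ Vr) ≤ Ul := inf_le_left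
      have hZ : Ul ⊓ (Ul ⊔ Vr) ≤ Ul ⊔ Vr := inf_le_right
      have hZU : Ul ⊓ (Ul ⊔ Vr) ≤ U := hZUl.trans inf_le_left
      calc res S.X₂ hZ (S.f.hom.app (op (Ul ⊔ Vr)) τ)
          = S.f.hom.app _ (res S.X₁ hZ τ) := (app_res S.f hZ τ).symm
        _ = S.f.hom.app _ (res S.X₁ hZUl (res S.X₁ le_sup_left τ)) := by
            rw [res_res S.X₁ le_sup_left hZUl hZ]
        _ = S.f.hom.app _ (res S.X₁ hZU t) := by
            rw [hτ1, res_res S.X₁ inf_le_left hZUl hZU]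
        _ = res S.X₂ hZU (S.f.hom.app (op U) t) := app_res S.f hZU t
        _ = res S.X₂ hZ (res S.X₂ (le_top : Ul ⊔ Vr ≤ ⊤) s) := by
            rw [ht, res_res S.X₂ le_top hZU (le_top : Ul ⊓ (Ul ⊔ Vr) ≤ ⊤),
              res_res S.X₂ le_top hZ (le_top : Ul ⊓ (Ul ⊔ Vr) ≤ ⊤)]
    · have hZVr : Vr ⊓ (Ul ⊔ Vr) ≤ Vr := inf_le_left
      have hZ : Vr ⊓ (Ul ⊔ Vr) ≤ Ul ⊔ Vr := inf_le_right
      have hZV : Vr ⊓ (Ul ⊔ Vr) ≤ V := hZVr.trans hVrV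
      calc res S.X₂ hZ (S.f.hom.app (op (Ul ⊔ Vr)) τ)
          = S.f.hom.app _ (res S.X₁ hZ τ) := (app_res S.f hZ τ).symm
        _ = S.f.hom.app _ (res S.X₁ hZVr (res S.X₁ le_sup_right τ)) := by
            rw [res_res S.X₁ le_sup_right hZVr hZ]
        _ = S.f.hom.app _ (res S.X₁ hZV h + res S.X₁ (le_top : Vr ⊓ (Ul ⊔ Vr) ≤ ⊤) aext)
            := by
            rw [hτ2, map_add, res_res S.X₁ hVrV hZVr hZV,
              res_res S.X₁ le_top hZVr (le_top : Vr ⊓ (Ul ⊔ Vr) ≤ ⊤)]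
        _ = res S.X₂ hZV (S.f.hom.app (op V) h)
              + res S.X₂ (le_top : Vr ⊓ (Ul ⊔ Vr) ≤ ⊤) (S.f.hom.app (op ⊤) aext) := by
            rw [map_add, app_res S.f hZV h, app_res S.f le_top aext]
        _ = res S.X₂ hZ (res S.X₂ (le_top : Ul ⊔ Vr ≤ ⊤) s) := by
            rw [hfaext, map_zero, add_zero, hh,
              res_res S.X₂ le_top hZV (le_top : Vr ⊓ (Ul ⊔ Vr) ≤ ⊤),
              res_res S.X₂ le_top hZ (le_top : Vr ⊓ (Ul ⊔ Vr) ≤ ⊤)]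
  -- P holds at min 1 (c + δ/2)
  have hcov : ∀ z : ↑XI, z.1 ≤ min 1 (c + δ/2) → z ∈ Ul ⊔ Vr := by
    intro z hz
    rcases lt_or_ge z.1 x with h1 | h1
    · exact Or.inl ⟨hU z (le_of_lt h1), h1⟩
    · refine Or.inr ⟨?_, ?_⟩
      · show m < z.1; linarith
      · show z.1 < c + δ
        have := hz.trans (min_le_right 1 (c + δ/2))
        linarith
  have hPy : P (min 1 (c + δ/2)) := ⟨Ul ⊔ Vr, hcov, τ, hfτ⟩
  have hyS : min 1 (c + δ/2) ∈ Sset :=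
    ⟨⟨le_min zero_le_one (by linarith), min_le_left _ _⟩, hPy⟩
  have hceq : c = 1 := by
    by_contra hne1
    have hclt : c < 1 := lt_of_le_of_ne hc1 hne1
    have h1 : min 1 (c + δ/2) ≤ c := le_csSup hSbdd hyS
    have h2 : c < min 1 (c + δ/2) := lt_min hclt (by linarith)
    linarith
  have hP1 : P 1 := by
    have : min 1 (c + δ/2) = 1 := by
      rw [hceq]; exact min_eq_left (by linarith)
    rw [← this]; exact hPy
  obtain ⟨Uf, hUf, tf, htf⟩ := hP1
  have hUtop : (⊤ : Opens XI) ≤ Uf := fun z _ => hUf z z.2.2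
  refine ⟨res S.X₁ hUtop tf, ?_⟩
  rw [app_res S.f hUtop tf, htf,
    res_res S.X₂ le_top hUtop (le_refl ⊤), res_self]

end SV2

open SV SV2 in
/-- For the closed unit interval `I = [0,1]` and any sheaf of abelian groups `F` on `I`,
the sheaf cohomology `H^p(I, F)` vanishes for all `p > 1`. -/
theorem sheaf_cohomology_unitInterval_vanishes
    [EnoughInjectives (AbSheaf unitInterval')]
    (F : AbSheaf unitInterval') (p : ℕ) (hp : 1 < p) :
    IsZero ((sheafCohomology unitInterval' p).obj F) := by
  obtain ⟨n, rfl⟩ : ∃ n, p = n + 2 := ⟨p - 2, by omega⟩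
  let I : InjectiveResolution F := InjectiveResolution.of F
  let K := ((globalSections unitInterval').mapHomologicalComplex
    (ComplexShape.up ℕ)).obj I.cocomplex
  have hiso := I.isoRightDerivedObj (globalSections unitInterval') (n + 2)
  refine IsZero.of_iso ?_ hiso
  have hEx : K.ExactAt (n + 2) := by
    rw [HomologicalComplex.exactAt_iff' K (n+1) (n+2) (n+3) (by simp)
      (by simp only [CochainComplex.next]; rfl)]
    rw [ShortComplex.ab_exact_iff]
    intro s hs
    have hexact : (ShortComplex.mk _ _
        (I.cocomplex.d_comp_d (n+1) (n+2) (n+3))).Exact := I.exact_succ (n+1)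
    have hker : KerExt (ShortComplex.mk _ _
        (I.cocomplex.d_comp_d (n+1) (n+2) (n+3))).f := by
      have h0 : (ShortComplex.mk _ _
          (I.cocomplex.d_comp_d n (n+1) (n+2))).Exact := I.exact_succ n
      exact kerExt_of_flabby _ h0
        (@flabby_of_injective _ (I.cocomplex.X n) (I.injective n))
    obtain ⟨t, ht⟩ := global_surj _ hexact hker s hs
    exact ⟨t, ht⟩
  rw [HomologicalComplex.exactAt_iff_isZero_homology] at hEx
  exact hEx
end
end

section
/- Let $X$ be a paracompact Hausdorff space, $U \subseteq X$ open with open inclusion $j: U \hookrightarrow X$, and $\mathcal{S}$ a soft sheaf of abelian groups on $X$. Then the extension by zero $j_! (\mathcal{S}|_U)$ is a soft sheaf on $X$. -/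
noncomputable section
open CategoryTheory CategoryTheory.Limits TopologicalSpace Opposite

/-- The stalk of a sheaf of abelian groups at a point. -/
def stalkAt {X : TopCat.{0}} (F : AbSheaf X) (x : X) : AddCommGrpCat.{0} :=
  TopCat.Presheaf.stalk (C := AddCommGrpCat) (X := X) F.val x

/-- The germ map of a sheaf of abelian groups. -/
def germAt {X : TopCat.{0}} (F : AbSheaf X) (U : Opens X) (x : X) (hx : x ∈ U) :
    F.val.obj (op U) ⟶ stalkAt F x :=
  TopCat.Presheaf.germ (C := AddCommGrpCat) (X := X) F.val U x hx

/-- A section of the sheaf `F` over an arbitrary subset `S ⊆ X` (i.e. a section of the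
restriction `F|_S`, described concretely): a compatible family of germs over `S` which
locally comes from honest sections of `F`. -/
@[ext]
structure SectionOver {X : TopCat.{0}} (F : AbSheaf X) (S : Set X) where
  /-- the germ of the section at each point of `S` -/
  germs : ∀ x ∈ S, stalkAt F x
  /-- locally, the family of germs comes from a section of `F` on an open neighborhood -/
  isLocal : ∀ x (hx : x ∈ S), ∃ (U : Opens X) (_ : x ∈ U) (t : F.val.obj (op U)),
    ∀ y (hyS : y ∈ S) (hyU : y ∈ U), germs y hyS = germAt F U y hyU t

/-- Restriction of a global section of `F` to a section over a subset `S`. -/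
def restrictSection {X : TopCat.{0}} (F : AbSheaf X) (S : Set X) (s : F.val.obj (op ⊤)) :
    SectionOver F S where
  germs := fun x _ => germAt F ⊤ x trivial s
  isLocal := fun x _ => ⟨⊤, trivial, s, fun _ _ _ => rfl⟩

/-- A sheaf of abelian groups `F` on `X` is soft if every section of `F` over every closed
subset extends to a global section. -/
def IsSoft {X : TopCat.{0}} (F : AbSheaf X) : Prop :=
  ∀ S : Set X, IsClosed S → ∀ σ : SectionOver F S,
    ∃ s : F.val.obj (op ⊤), restrictSection F S s = σ

/-- `E` is (isomorphic to) the extension by zero `j_!(G|_U)` of the restriction of `G` to the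
open set `U`, realized by a morphism `φ : E ⟶ G` which is an isomorphism on stalks over `U`,
while the stalks of `E` outside of `U` vanish. -/
def IsExtensionByZeroOf {X : TopCat.{0}} (E G : AbSheaf X) (φ : E ⟶ G) (U : Set X) : Prop :=
  (∀ x ∈ U, IsIso ((TopCat.Presheaf.stalkFunctor AddCommGrpCat x).map φ.hom)) ∧
    (∀ x ∉ U, IsZero (stalkAt E x))

lemma zero_stalk_eq {X : TopCat.{0}} {F : AbSheaf X} {x : X}
    (h : IsZero (stalkAt F x)) (a b : stalkAt F x) : a = b := by
  have h1 : (𝟙 (stalkAt F x) : _ ⟶ _) = 0 := h.eq_of_src _ _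
  have key : ∀ c : stalkAt F x, c = 0 := by
    intro c
    calc c = (𝟙 (stalkAt F x) : _ ⟶ _) c := rfl
    _ = (0 : stalkAt F x ⟶ stalkAt F x) c := by rw [h1]
    _ = 0 := rfl
  rw [key a, key b]

lemma germAt_def {X : TopCat.{0}} (F : AbSheaf X) (U : Opens X) (x : X) (hx : x ∈ U)
    (s : F.val.obj (op U)) :
    germAt F U x hx s = TopCat.Presheaf.germ F.val U x hx s := rfl

lemma my_section_ext {X : TopCat.{0}} (E : AbSheaf X) (W : Opens X) (a b : E.val.obj (op W))
    (h : ∀ z (hz : z ∈ W), TopCat.Presheaf.germ E.val W z hz a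
      = TopCat.Presheaf.germ E.val W z hz b) : a = b :=
  TopCat.Presheaf.section_ext (show TopCat.Sheaf AddCommGrpCat X from E) W a b h

lemma my_gluing {X : TopCat.{0}} (E : AbSheaf X) {ι : Type} (O : ι → Opens X)
    (hcov : (⊤ : Opens X) ≤ iSup O) (sf : ∀ i, E.val.obj (op (O i)))
    (h : TopCat.Presheaf.IsCompatible E.val O sf) :
    ∃ t : E.val.obj (op ⊤), ∀ i, E.val.map (homOfLE (le_top : O i ≤ ⊤)).op t = sf i := by
  obtain ⟨t, ht, -⟩ := TopCat.Sheaf.existsUnique_gluing'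
    (show TopCat.Sheaf AddCommGrpCat X from E) O ⊤ (fun i => homOfLE le_top) hcov sf h
  exact ⟨t, ht⟩

lemma bridge_germ_res {X : TopCat.{0}} (F : AbSheaf X) {V W : Opens X} (i : V ⟶ W) (x : X)
    (hx : x ∈ V) (s : F.val.obj (op W)) :
    TopCat.Presheaf.germ F.val V x hx (F.val.map i.op s)
      = TopCat.Presheaf.germ F.val W x (i.le hx) s :=
  TopCat.Presheaf.germ_res_apply F.val i x hx s

lemma bridge_stalk_map {X : TopCat.{0}} {E S : AbSheaf X} (φ : E ⟶ S) (V : Opens X) (x : X)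
    (hx : x ∈ V) (s : E.val.obj (op V)) :
    (TopCat.Presheaf.stalkFunctor AddCommGrpCat x).map φ.hom
        (TopCat.Presheaf.germ E.val V x hx s)
      = TopCat.Presheaf.germ S.val V x hx (φ.hom.app (op V) s) :=
  TopCat.Presheaf.stalkFunctor_map_germ_apply V x hx φ.hom s

lemma bridge_germ_exist {X : TopCat.{0}} (F : AbSheaf X) (x : X) (t : stalkAt F x) :
    ∃ (U : Opens X) (m : x ∈ U) (s : F.val.obj (op U)),
      TopCat.Presheaf.germ F.val U x m s = t :=
  TopCat.Presheaf.germ_exist F.val t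

lemma bridge_germ_eq {X : TopCat.{0}} (F : AbSheaf X) {U V : Opens X} (x : X) (mU : x ∈ U)
    (mV : x ∈ V) (s : F.val.obj (op U)) (t : F.val.obj (op V))
    (h : TopCat.Presheaf.germ F.val U x mU s = TopCat.Presheaf.germ F.val V x mV t) :
    ∃ (W : Opens X) (_ : x ∈ W) (iU : W ⟶ U) (iV : W ⟶ V),
      F.val.map iU.op s = F.val.map iV.op t :=
  TopCat.Presheaf.germ_eq F.val x mU mV s t h

lemma bridge_injective {X : TopCat.{0}} {E S : AbSheaf X} (φ : E ⟶ S) {x : X}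
    (h : IsIso ((TopCat.Presheaf.stalkFunctor AddCommGrpCat x).map φ.hom))
    {a b : stalkAt E x}
    (hab : (TopCat.Presheaf.stalkFunctor AddCommGrpCat x).map φ.hom a
      = (TopCat.Presheaf.stalkFunctor AddCommGrpCat x).map φ.hom b) : a = b := by
  haveI := h
  exact (ConcreteCategory.bijective_of_isIso
    ((TopCat.Presheaf.stalkFunctor AddCommGrpCat x).map φ.hom)).injective hab

lemma bridge_surjective {X : TopCat.{0}} {E S : AbSheaf X} (φ : E ⟶ S) {x : X}
    (h : IsIso ((TopCat.Presheaf.stalkFunctor AddCommGrpCat x).map φ.hom))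
    (t : stalkAt S x) :
    ∃ g : stalkAt E x, (TopCat.Presheaf.stalkFunctor AddCommGrpCat x).map φ.hom g = t := by
  haveI := h
  obtain ⟨g, hg⟩ := (ConcreteCategory.bijective_of_isIso
    ((TopCat.Presheaf.stalkFunctor AddCommGrpCat x).map φ.hom)).surjective t
  exact ⟨g, hg⟩


/-- If `X` is paracompact Hausdorff, `U ⊆ X` is open and `S` is a soft sheaf of abelian
groups on `X`, then the extension by zero `j_!(S|_U)` is a soft sheaf on `X`. -/
theorem isSoft_extensionByZero (X : TopCat.{0}) [T2Space X] [ParacompactSpace X]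
    (U : Opens X) (S : AbSheaf X) (hS : IsSoft S)
    (E : AbSheaf X) (φ : E ⟶ S) (hE : IsExtensionByZeroOf E S φ (U : Set X)) :
    IsSoft E := by
  classical
  intro A hA σ
  -- the pushed-forward section over A ∪ Uᶜ
  let A' : Set X := A ∪ (↑U)ᶜ
  have hA' : IsClosed A' := hA.union (U.2.isClosed_compl)
  let σ' : SectionOver S A' :=
    { germs := fun x _ =>
        if h : x ∈ A then (TopCat.Presheaf.stalkFunctor AddCommGrpCat x).map φ.hom (σ.germs x h)
        else 0
      isLocal := by
        intro x hx
        by_cases h : x ∈ A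
        · obtain ⟨V, hxV, t, ht⟩ := σ.isLocal x h
          refine ⟨V, hxV, φ.hom.app (op V) t, ?_⟩
          intro y hyS hyU
          by_cases hy : y ∈ A
          · erw [dif_pos hy]
            have ht' : σ.germs y hy = TopCat.Presheaf.germ E.val V y hyU t := ht y hy hyU
            rw [ht', germAt_def]
            exact bridge_stalk_map φ V y hyU t
          · erw [dif_neg hy]
            have hyU' : y ∉ (U : Set X) := by
              rcases hyS with h1 | h1
              · exact absurd h1 hy
              · exact h1
            have hz : TopCat.Presheaf.germ E.val V y hyU t = 0 :=
              zero_stalk_eq (F := E) (hE.2 y hyU') _ _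
            rw [germAt_def, ← bridge_stalk_map φ V y hyU t, hz]; erw [map_zero]; rfl
        · refine ⟨⟨Aᶜ, hA.isOpen_compl⟩, h, 0, ?_⟩
          intro y hyS hyU
          have hy : y ∉ A := hyU
          erw [dif_neg hy]
          rw [germAt_def, map_zero]; rfl }
  obtain ⟨s, hs⟩ := hS A' hA' σ'
  have hs' : ∀ x (hx : x ∈ A'),
      TopCat.Presheaf.germ S.val ⊤ x trivial s = σ'.germs x hx := by
    intro x hx
    have h := congrFun (congrFun (congrArg SectionOver.germs hs) x) hx
    exact h
  -- germs of s vanish outside U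
  have hszero : ∀ x, x ∉ (U : Set X) →
      TopCat.Presheaf.germ S.val ⊤ x trivial s = 0 := by
    intro x hxU
    have hx' : x ∈ A' := Or.inr hxU
    rw [hs' x hx']
    by_cases h : x ∈ A
    · simp only [σ']; erw [dif_pos h]
      have hσ0 : σ.germs x h = 0 := zero_stalk_eq (hE.2 x hxU) _ _
      rw [hσ0]; erw [map_zero]; rfl
    · simp only [σ']; erw [dif_neg h]; rfl
  -- local lifts of s to E
  have key : ∀ x : X, ∃ (O : Opens X) (_ : x ∈ O) (τ : E.val.obj (op O)),
      φ.hom.app (op O) τ = S.val.map (homOfLE (le_top : O ≤ ⊤)).op s := by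
    intro x
    by_cases hxU : x ∈ (U : Set X)
    · obtain ⟨g, hg⟩ := bridge_surjective φ (hE.1 x hxU)
        (TopCat.Presheaf.germ S.val ⊤ x trivial s)
      obtain ⟨N, hxN, e, he⟩ := bridge_germ_exist E x g
      have heq : TopCat.Presheaf.germ S.val N x hxN (φ.hom.app (op N) e)
          = TopCat.Presheaf.germ S.val ⊤ x trivial s := by
        rw [← bridge_stalk_map φ N x hxN e, he, hg]
      obtain ⟨W, hxW, iU, iV, hres⟩ := bridge_germ_eq S (V := ⊤) x hxN trivial _ _ heq
      refine ⟨W, hxW, E.val.map iU.op e, ?_⟩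
      have hnat : φ.hom.app (op W) (E.val.map iU.op e)
          = S.val.map iU.op (φ.hom.app (op N) e) :=
        ConcreteCategory.congr_hom (φ.hom.naturality iU.op) e
      rw [hnat, hres]
      have hiv : iV = homOfLE le_top := Subsingleton.elim _ _
      rw [hiv]
    · have h0 : TopCat.Presheaf.germ S.val ⊤ x trivial s
          = TopCat.Presheaf.germ S.val ⊤ x trivial (0 : S.val.obj (op ⊤)) := by
        rw [map_zero]
        exact hszero x hxU
      obtain ⟨W, hxW, iU, iV, hres⟩ :=
        bridge_germ_eq S (U := ⊤) (V := ⊤) x trivial trivial _ _ h0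
      refine ⟨W, hxW, 0, ?_⟩
      rw [map_zero] at hres
      rw [map_zero]
      have hiu : iU = homOfLE le_top := Subsingleton.elim _ _
      rw [← hiu, hres]
  choose O hO τ hτ using key
  -- compatibility of local lifts
  have compat : TopCat.Presheaf.IsCompatible E.val O τ := by
    intro i j
    apply my_section_ext E
    intro z hz
    rw [bridge_germ_res E (Opens.infLELeft (O i) (O j)) z hz (τ i),
      bridge_germ_res E (Opens.infLERight (O i) (O j)) z hz (τ j)]
    by_cases hzU : z ∈ (U : Set X)
    · apply bridge_injective φ (hE.1 z hzU)
      rw [bridge_stalk_map, bridge_stalk_map, hτ i, hτ j,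
        bridge_germ_res S (homOfLE le_top) z _ s, bridge_germ_res S (homOfLE le_top) z _ s]
    · exact zero_stalk_eq (hE.2 z hzU) _ _
  -- glue
  obtain ⟨t, ht⟩ := my_gluing E O (fun x _ => Opens.mem_iSup.mpr ⟨x, hO x⟩) τ compat
  refine ⟨t, ?_⟩
  ext x hx
  show TopCat.Presheaf.germ E.val ⊤ x trivial t = σ.germs x hx
  by_cases hxU : x ∈ (U : Set X)
  · apply bridge_injective φ (hE.1 x hxU)
    have h1 : TopCat.Presheaf.germ E.val ⊤ x trivial t
        = TopCat.Presheaf.germ E.val (O x) x (hO x) (τ x) := by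
      rw [← ht x]
      exact (bridge_germ_res E (homOfLE le_top) x (hO x) t).symm
    have h2 : (TopCat.Presheaf.stalkFunctor AddCommGrpCat x).map φ.hom (σ.germs x hx)
        = TopCat.Presheaf.germ S.val ⊤ x trivial s := by
      rw [hs' x (Or.inl hx)]
      simp only [σ']; erw [dif_pos hx]
    rw [h1, bridge_stalk_map φ (O x) x (hO x) (τ x), hτ x,
      bridge_germ_res S (homOfLE le_top) x (hO x) s, h2]
  · exact zero_stalk_eq (hE.2 x hxU) _ _
end
end
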